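/- Let n ∈ ℕ and t1, t2, t4, z ∈ ℂ. Assume t1+t2, t1+t4, and t1+1−t4−n all lie outside {0, −1, …, −(n−1)}. Then (−1)^n · W_n(z; t1, t2, 1−t4−n, t4) = (t1+t2)_n · (t4+z)_n · (t4−z)_n = (t1+t2)_n · ∏_{j=1}^{n} [(t4+j−1)² − z²]; equivalently, in the variable x = −z², the monic Wilson polynomial (−1)^n W_n/(t1+t2)_n equals ∏_{j=1}^{n} [x + (t4+j−1)²]. -/
import Mathlib


open Finset

/-- Pochhammer symbol `(a)_k = a (a+1) ⋯ (a+k-1)`. -/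
noncomputable def poch (a : ℂ) (k : ℕ) : ℂ := ∏ i ∈ Finset.range k, (a + i)

/-- The Wilson polynomial `W_n(z; t1,t2,t3,t4)` in the variable `z` (with `x = -z²`). -/
noncomputable def wilson (n : ℕ) (z t1 t2 t3 t4 : ℂ) : ℂ :=
  poch (t1 + t2) n * poch (t1 + t3) n * poch (t1 + t4) n *
    ∑ k ∈ Finset.range (n + 1),
      (poch (-(n : ℂ)) k * poch (t1 + t2 + t3 + t4 + (n : ℂ) - 1) k *
        poch (t1 + z) k * poch (t1 - z) k) /
      ((k.factorial : ℂ) * poch (t1 + t2) k * poch (t1 + t3) k * poch (t1 + t4) k)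

lemma poch_zero (a : ℂ) : poch a 0 = 1 := by simp [poch]
lemma poch_one (a : ℂ) : poch a 1 = a := by simp [poch]
lemma poch_succ (a : ℂ) (k : ℕ) : poch a (k+1) = poch a k * (a + k) := by
  simp [poch, Finset.prod_range_succ]
lemma poch_succ' (a : ℂ) (k : ℕ) : poch a (k+1) = a * poch (a+1) k := by
  rw [poch, Finset.prod_range_succ']
  simp only [Nat.cast_zero, add_zero]
  rw [mul_comm]
  congr 1
  rw [poch]
  exact Finset.prod_congr rfl fun i _ => by push_cast; ring

lemma poch_add (a : ℂ) (k m : ℕ) : poch a (k+m) = poch a k * poch (a+k) m := by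
  rw [poch, poch, poch, Finset.prod_range_add]
  congr 1
  exact Finset.prod_congr rfl fun i _ => by push_cast; ring

lemma poch_ne_zero {a : ℂ} {k : ℕ} (h : ∀ i : ℕ, i < k → a + i ≠ 0) : poch a k ≠ 0 := by
  rw [poch]
  exact Finset.prod_ne_zero_iff.2 fun i hi => h i (Finset.mem_range.1 hi)

lemma poch_neg_nat (n : ℕ) (k : ℕ) (hk : k ≤ n) :
    poch (-(n:ℂ)) k = (-1)^k * k.factorial * n.choose k := by
  induction k with
  | zero => simp [poch_zero]
  | succ j ih =>
    have hj : j ≤ n := by omega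
    have hc : ((n.choose (j+1) : ℂ)) * ((j:ℂ)+1) = (n.choose j : ℂ) * ((n:ℂ) - j) := by
      have h2 := Nat.choose_succ_right_eq n j
      have h3 := congrArg (Nat.cast (R := ℂ)) h2
      push_cast [Nat.cast_sub hj] at h3
      exact_mod_cast h3
    rw [poch_succ, ih hj]
    push_cast [Nat.factorial_succ]
    linear_combination ((-1:ℂ)^j * (j.factorial : ℂ)) * hc

noncomputable def T (a b c : ℂ) (n k : ℕ) : ℂ :=
  (-1)^k * (n.choose k) * poch a k * poch b k * poch (c + k) (n - k) *
    poch (a + b + 1 - c - n + k) (n - k)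

noncomputable def Gd (a b c : ℂ) (n k : ℕ) : ℂ :=
  if k = 0 then 0
  else if k ≤ n then
    -((-1)^k * (n.choose (k-1)) * (c + k - 1) * (a + b + 1 - c - n + k - 1) *
      poch a k * poch b k * poch (c + k) (n - k) * poch (a + b + 1 - c - n + k) (n - k))
  else if k = n + 1 then (-1)^n * poch a (n+1) * poch b (n+1)
  else 0

set_option maxHeartbeats 2000000 in
set_option maxRecDepth 8000 in
lemma key (a b c : ℂ) (n k : ℕ) (hk : k ≤ n + 1) :
    T a b c (n+1) k + (c - a + n) * (c - b + n) * T a b c n k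
      = Gd a b c n (k+1) - Gd a b c n k := by
  by_cases hk1 : k = n + 1
  · subst hk1
    have g2 : Gd a b c n (n+1+1) = 0 := by
      rw [Gd, if_neg (by omega), if_neg (by omega), if_neg (by omega)]
    have g1 : Gd a b c n (n+1) = (-1)^n * poch a (n+1) * poch b (n+1) := by
      rw [Gd, if_neg (by omega), if_neg (by omega), if_pos rfl]
    rw [g2, g1]
    simp only [T, Nat.choose_self, Nat.choose_succ_self, Nat.sub_self, poch_zero]
    push_cast
    ring
  · have hkn : k ≤ n := by omega
    rcases Nat.eq_zero_or_pos k with hk0 | hkpos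
    · subst hk0
      rcases Nat.eq_zero_or_pos n with hn0 | hnpos
      · subst hn0
        have g1 : Gd a b c 0 1 = poch a 1 * poch b 1 := by
          rw [Gd, if_neg (by omega), if_neg (by omega), if_pos rfl]
          norm_num
        have g0 : Gd a b c 0 0 = 0 := by rw [Gd, if_pos rfl]
        rw [g1, g0]
        simp only [T, Nat.choose_zero_right, Nat.sub_zero, Nat.cast_zero, Nat.cast_one, add_zero, zero_add, poch_zero, poch_one, Nat.sub_self]
        push_cast
        ring
      · -- k = 0, n ≥ 1
        obtain ⟨m, rfl⟩ : ∃ m, n = m + 1 := ⟨n - 1, by omega⟩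
        have g0 : Gd a b c (m+1) 0 = 0 := by rw [Gd, if_pos rfl]
        have g1 : Gd a b c (m+1) 1 =
            c * (a+b+1-c-((m:ℂ)+1)) * a * b * poch (c+1) m * poch (a+b+1-c-(m:ℂ)) m := by
          rw [Gd, if_neg (by omega), if_pos (by omega)]
          simp only [Nat.choose_zero_right, Nat.add_sub_cancel, Nat.sub_self, poch_one,
            Nat.cast_one, Nat.cast_zero]
          push_cast
          ring
        rw [g1, g0, sub_zero]
        simp only [T, Nat.choose_zero_right, Nat.sub_zero, Nat.cast_zero, add_zero, pow_zero,
          poch_zero]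
        rw [poch_succ' c (m+1), poch_succ (c+1) m, poch_succ' c m,
          poch_succ' (a+b+1-c-((m+1+1 : ℕ) : ℂ)) (m+1),
          poch_succ' (a+b+1-c-((m+1+1 : ℕ) : ℂ) + 1) m,
          poch_succ' (a+b+1-c-((m+1 : ℕ) : ℂ)) m]
        push_cast
        ring
    · -- 1 ≤ k ≤ n
      rcases Nat.lt_or_ge k n with hlt | hge
      · -- interior : 1 ≤ k < n
        obtain ⟨j, rfl⟩ : ∃ j, k = j + 1 := ⟨k - 1, by omega⟩
        obtain ⟨m, rfl⟩ : ∃ m, n = j + 1 + 1 + m := ⟨n - j - 2, by omega⟩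
        have hp := congrArg (Nat.cast (R := ℂ)) (Nat.choose_succ_succ (j+1+1+m) j)
        simp only [Nat.succ_eq_add_one] at hp
        push_cast at hp
        have hr0 := Nat.choose_succ_right_eq (j+1+1+m) j
        rw [show j+1+1+m - j = m+2 from by omega] at hr0
        have hrel := congrArg (Nat.cast (R := ℂ)) hr0
        push_cast at hrel
        have g1 : Gd a b c (j+1+1+m) (j+1+1) =
            (-1)^(j+1) * ((j+1+1+m).choose (j+1) : ℂ) * (c+(j:ℂ)+1) *
              (a+b+1-c-((j:ℂ)+(m:ℂ)+2)+(j:ℂ)+1) *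
              (poch a (j+1) * (a+(j:ℂ)+1)) * (poch b (j+1) * (b+(j:ℂ)+1)) *
              poch (c+(j:ℂ)+2) m * poch (a+b+1-c-(m:ℂ)) m := by
          rw [Gd, if_neg (by omega), if_pos (by omega)]
          simp only [Nat.add_sub_cancel, show j+1+1+m - (j+1+1) = m from by omega]
          rw [poch_succ a (j+1), poch_succ b (j+1)]
          push_cast
          ring
        have g0 : Gd a b c (j+1+1+m) (j+1) =
            -((-1)^(j+1) * ((j+1+1+m).choose j : ℂ) * (c+(j:ℂ)) * (a+b-c-(m:ℂ)-1) *
              poch a (j+1) * poch b (j+1) * ((c+(j:ℂ)+1) * poch (c+(j:ℂ)+2) m) *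
              ((a+b-c-(m:ℂ)) * poch (a+b+1-c-(m:ℂ)) m)) := by
          rw [Gd, if_neg (by omega), if_pos (by omega)]
          simp only [Nat.add_sub_cancel, show j+1+1+m - (j+1) = m+1 from by omega]
          rw [poch_succ' (c + ((j+1 : ℕ) : ℂ)) m,
            poch_succ' (a+b+1-c-((j+1+1+m : ℕ) : ℂ) + ((j+1 : ℕ) : ℂ)) m]
          push_cast
          ring
        rw [g1, g0]
        simp only [T, show j+1+1+m+1 - (j+1) = m+1+1 from by omega,
          show j+1+1+m - (j+1) = m+1 from by omega]
        rw [poch_succ' (c + ((j+1 : ℕ) : ℂ)) (m+1),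
          poch_succ (c + ((j+1 : ℕ) : ℂ) + 1) m,
          poch_succ' (a+b+1-c-((j+1+1+m+1 : ℕ) : ℂ) + ((j+1 : ℕ) : ℂ)) (m+1),
          poch_succ' (a+b+1-c-((j+1+1+m+1 : ℕ) : ℂ) + ((j+1 : ℕ) : ℂ) + 1) m,
          poch_succ' (c + ((j+1 : ℕ) : ℂ)) m,
          poch_succ' (a+b+1-c-((j+1+1+m : ℕ) : ℂ) + ((j+1 : ℕ) : ℂ)) m]
        rw [show (a+b+1-c-((j+1+1+m+1 : ℕ) : ℂ) + ((j+1 : ℕ) : ℂ) + 1 + 1) = a+b+1-c-(m:ℂ) from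
            by push_cast; ring,
          show (c + ((j+1 : ℕ) : ℂ) + 1) = c + (j:ℂ) + 2 from by push_cast; ring,
          show (a+b+1-c-((j+1+1+m : ℕ) : ℂ) + ((j+1 : ℕ) : ℂ) + 1) = a+b+1-c-(m:ℂ) from
            by push_cast; ring]
        push_cast (config := { maxSteps := 10000000 })
        linear_combination
          ((-1:ℂ)^(j+1) * poch a (j+1) * poch b (j+1) *
            ((c+(j:ℂ)+1) * poch (c+(j:ℂ)+2) m * (c+(j:ℂ)+(m:ℂ)+2)) *
            ((a+b-c-(m:ℂ)-1) * (a+b-c-(m:ℂ)) * poch (a+b+1-c-(m:ℂ)) m)) * hp -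
          ((-1:ℂ)^(j+1) * poch a (j+1) * poch b (j+1) * (c+(j:ℂ)+1) * (a+b-c-(m:ℂ)) *
            poch (c+(j:ℂ)+2) m * poch (a+b+1-c-(m:ℂ)) m * (a+b-c-(m:ℂ)-1)) * hrel
      · -- k = n
        have hn : n = k := le_antisymm hge hkn
        subst hn
        obtain ⟨j, rfl⟩ : ∃ j, n = j + 1 := ⟨n - 1, by omega⟩
        have g2 : Gd a b c (j+1) (j+1+1) =
            (-1)^(j+1) * (poch a (j+1) * (a+(j:ℂ)+1)) * (poch b (j+1) * (b+(j:ℂ)+1)) := by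
          rw [Gd, if_neg (by omega), if_neg (by omega), if_pos rfl]
          rw [poch_succ a (j+1), poch_succ b (j+1)]
          push_cast
          ring
        have g1 : Gd a b c (j+1) (j+1) =
            -((-1)^(j+1) * ((j:ℂ)+1) * (c+(j:ℂ)) * (a+b-c) * poch a (j+1) * poch b (j+1)) := by
          rw [Gd, if_neg (by omega), if_pos le_rfl]
          simp only [Nat.add_sub_cancel, Nat.choose_succ_self_right, Nat.sub_self, poch_zero]
          push_cast
          ring
        rw [g2, g1]
        simp only [T, Nat.choose_self, Nat.sub_self, poch_zero, Nat.choose_succ_self_right,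
          show j+1+1 - (j+1) = 1 from by omega, poch_one]
        push_cast
        ring

lemma PS (n : ℕ) (a b c : ℂ) :
    ∑ k ∈ Finset.range (n+1), T a b c n k = (-1)^n * poch (c-a) n * poch (c-b) n := by
  induction n with
  | zero => simp [T, poch_zero]
  | succ n ih =>
    have tele : ∑ k ∈ Finset.range (n+1+1),
        (T a b c (n+1) k + (c - a + n) * (c - b + n) * T a b c n k) = 0 := by
      have h1 : ∀ k ∈ Finset.range (n+1+1),
          T a b c (n+1) k + (c - a + n) * (c - b + n) * T a b c n k
            = Gd a b c n (k+1) - Gd a b c n k := fun k hk =>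
        key a b c n k (by have := Finset.mem_range.1 hk; omega)
      rw [Finset.sum_congr rfl h1, Finset.sum_range_sub (Gd a b c n)]
      have g0 : Gd a b c n 0 = 0 := by rw [Gd, if_pos rfl]
      have gt : Gd a b c n (n+1+1) = 0 := by
        rw [Gd, if_neg (by omega), if_neg (by omega), if_neg (by omega)]
      rw [g0, gt, sub_zero]
    rw [Finset.sum_add_distrib, ← Finset.mul_sum] at tele
    rw [Finset.sum_range_succ (T a b c n) (n+1)] at tele
    have hz : T a b c n (n+1) = 0 := by
      simp [T, Nat.choose_succ_self]
    rw [hz, add_zero, ih] at tele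
    rw [poch_succ (c-a) n, poch_succ (c-b) n]
    push_cast at tele ⊢
    linear_combination tele

set_option maxHeartbeats 1000000 in
theorem wilson_factorization_case2 (n : ℕ) (t1 t2 t4 z : ℂ)
    (h12 : ∀ k : ℕ, k < n → t1 + t2 + k ≠ 0)
    (h14 : ∀ k : ℕ, k < n → t1 + t4 + k ≠ 0)
    (h13 : ∀ k : ℕ, k < n → t1 + 1 - t4 - (n : ℂ) + k ≠ 0) :
    (-1 : ℂ) ^ n * wilson n z t1 t2 (1 - t4 - (n : ℂ)) t4
        = poch (t1 + t2) n * (poch (t4 + z) n * poch (t4 - z) n) ∧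
    poch (t1 + t2) n * (poch (t4 + z) n * poch (t4 - z) n)
        = poch (t1 + t2) n * ∏ j ∈ Finset.range n, ((t4 + j) ^ 2 - z ^ 2) := by
  constructor
  · have hsum : ∀ k ∈ Finset.range (n+1),
        poch (t1+(1-t4-(n:ℂ))) n * poch (t1+t4) n *
          ((poch (-(n:ℂ)) k * poch (t1+t2+(1-t4-(n:ℂ))+t4+(n:ℂ)-1) k *
              poch (t1+z) k * poch (t1-z) k) /
           ((k.factorial : ℂ) * poch (t1+t2) k * poch (t1+(1-t4-(n:ℂ))) k * poch (t1+t4) k))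
        = T (t1+z) (t1-z) (t1+t4) n k := by
      intro k hk
      have hkn : k ≤ n := by have := Finset.mem_range.1 hk; omega
      have h2 : poch (t1+t2) k ≠ 0 := poch_ne_zero fun i hi => h12 i (by omega)
      have h3 : poch (t1+(1-t4-(n:ℂ))) k ≠ 0 := poch_ne_zero fun i hi => by
        rw [show t1+(1-t4-(n:ℂ)) + (i:ℂ) = t1+1-t4-(n:ℂ)+i from by ring]
        exact h13 i (by omega)
      have h4 : poch (t1+t4) k ≠ 0 := poch_ne_zero fun i hi => h14 i (by omega)
      have hfac : (k.factorial : ℂ) ≠ 0 := Nat.cast_ne_zero.2 (Nat.factorial_ne_zero k)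
      have hneg := poch_neg_nat n k hkn
      have hmid : poch (t1+t2+(1-t4-(n:ℂ))+t4+(n:ℂ)-1) k = poch (t1+t2) k := by
        rw [show t1+t2+(1-t4-(n:ℂ))+t4+(n:ℂ)-1 = t1+t2 from by ring]
      have hs3 : poch (t1+(1-t4-(n:ℂ))) n
          = poch (t1+(1-t4-(n:ℂ))) k * poch (t1+(1-t4-(n:ℂ))+(k:ℂ)) (n-k) := by
        have h := poch_add (t1+(1-t4-(n:ℂ))) k (n-k)
        rw [show k + (n-k) = n from by omega] at h
        exact h
      have hs4 : poch (t1+t4) n = poch (t1+t4) k * poch (t1+t4+(k:ℂ)) (n-k) := by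
        have h := poch_add (t1+t4) k (n-k)
        rw [show k + (n-k) = n from by omega] at h
        exact h
      rw [hmid, hneg, hs3, hs4, T]
      field_simp
      ring
    have key2 : wilson n z t1 t2 (1-t4-(n:ℂ)) t4
        = poch (t1+t2) n * ∑ k ∈ Finset.range (n+1), T (t1+z) (t1-z) (t1+t4) n k := by
      rw [wilson]
      rw [show poch (t1+t2) n * poch (t1+(1-t4-(n:ℂ))) n * poch (t1+t4) n
            * (∑ k ∈ Finset.range (n + 1),
              (poch (-(n : ℂ)) k * poch (t1 + t2 + (1-t4-(n:ℂ)) + t4 + (n : ℂ) - 1) k *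
                poch (t1 + z) k * poch (t1 - z) k) /
              ((k.factorial : ℂ) * poch (t1 + t2) k * poch (t1 + (1-t4-(n:ℂ))) k *
                poch (t1 + t4) k))
          = poch (t1+t2) n * ((poch (t1+(1-t4-(n:ℂ))) n * poch (t1+t4) n)
            * (∑ k ∈ Finset.range (n + 1),
              (poch (-(n : ℂ)) k * poch (t1 + t2 + (1-t4-(n:ℂ)) + t4 + (n : ℂ) - 1) k *
                poch (t1 + z) k * poch (t1 - z) k) /
              ((k.factorial : ℂ) * poch (t1 + t2) k * poch (t1 + (1-t4-(n:ℂ))) k *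
                poch (t1 + t4) k))) from by ring]
      rw [Finset.mul_sum, Finset.sum_congr rfl hsum]
    rw [key2, PS n (t1+z) (t1-z) (t1+t4)]
    rw [show t1+t4-(t1+z) = t4-z from by ring, show t1+t4-(t1-z) = t4+z from by ring]
    have hone : ((-1:ℂ)^n) * ((-1:ℂ)^n) = 1 := by
      rw [← mul_pow]; norm_num
    linear_combination (poch (t1+t2) n * poch (t4-z) n * poch (t4+z) n) * hone
  · congr 1
    rw [poch, poch, ← Finset.prod_mul_distrib]
    exact Finset.prod_congr rfl fun j _ => by ring
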